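/- (Kaplansky) Let A be a C*-algebra which is not commutative. Then there exists a non-zero x ∈ A with x² = 0. -/

import Mathlib

open MeasureTheory intervalIntegral
open scoped ContinuousFunctionalCalculus

private lemma kap_int1 {c s : ℝ} (h1 : -c ≤ s) (h2 : s ≤ c) :
    ∫ t in (-c)..c, max (s - t) 0 = (s + c)^2 / 2 := by
  have hcont : Continuous fun t : ℝ => max (s - t) 0 := by fun_prop
  rw [← intervalIntegral.integral_add_adjacent_intervals (a := -c) (b := s) (c := c)
      (hcont.intervalIntegrable _ _) (hcont.intervalIntegrable _ _)]
  have e1 : (∫ t in (-c)..s, max (s - t) 0) = ∫ t in (-c)..s, (s - t) := by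
    apply intervalIntegral.integral_congr
    intro t ht
    rw [Set.uIcc_of_le h1] at ht
    exact max_eq_left (by linarith [ht.2])
  have e2 : (∫ t in s..c, max (s - t) 0) = ∫ t in s..c, (0:ℝ) := by
    apply intervalIntegral.integral_congr
    intro t ht
    rw [Set.uIcc_of_le h2] at ht
    exact max_eq_right (by linarith [ht.1])
  have i1 : IntervalIntegrable (fun _ : ℝ => s) MeasureTheory.volume (-c) s :=
    (by fun_prop : Continuous fun _ : ℝ => s).intervalIntegrable _ _
  have i2 : IntervalIntegrable (fun t : ℝ => t) MeasureTheory.volume (-c) s :=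
    (by fun_prop : Continuous fun t : ℝ => t).intervalIntegrable _ _
  rw [e1, e2, intervalIntegral.integral_zero, intervalIntegral.integral_sub i1 i2,
    intervalIntegral.integral_const, integral_id]
  simp only [smul_eq_mul]
  ring

private lemma kap_int2 {c s : ℝ} (h1 : -c ≤ s) (h2 : s ≤ c) :
    ∫ t in (-c)..c, t * max (s - t) 0 = s^3/6 - s*c^2/2 - c^3/3 := by
  have hcont : Continuous fun t : ℝ => t * max (s - t) 0 := by fun_prop
  rw [← intervalIntegral.integral_add_adjacent_intervals (a := -c) (b := s) (c := c)
      (hcont.intervalIntegrable _ _) (hcont.intervalIntegrable _ _)]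
  have e1 : (∫ t in (-c)..s, t * max (s - t) 0) = ∫ t in (-c)..s, (s * t - t^2) := by
    apply intervalIntegral.integral_congr
    intro t ht
    rw [Set.uIcc_of_le h1] at ht
    show t * max (s - t) 0 = s * t - t^2
    rw [max_eq_left (by linarith [ht.2])]
    ring
  have e2 : (∫ t in s..c, t * max (s - t) 0) = ∫ t in s..c, (0:ℝ) := by
    apply intervalIntegral.integral_congr
    intro t ht
    rw [Set.uIcc_of_le h2] at ht
    show t * max (s - t) 0 = 0
    rw [max_eq_right (by linarith [ht.1]), mul_zero]
  have i1 : IntervalIntegrable (fun t : ℝ => s * t) MeasureTheory.volume (-c) s :=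
    (by fun_prop : Continuous fun t : ℝ => s * t).intervalIntegrable _ _
  have i2 : IntervalIntegrable (fun t : ℝ => t ^ 2) MeasureTheory.volume (-c) s :=
    (by fun_prop : Continuous fun t : ℝ => t ^ 2).intervalIntegrable _ _
  rw [e1, e2, intervalIntegral.integral_zero, intervalIntegral.integral_sub i1 i2,
    intervalIntegral.integral_const_mul, integral_id, integral_pow]
  push_cast
  ring


section
variable {B : Type*} [CStarAlgebra B]

private lemma cube_rel (hsq : ∀ z : B, z * z = 0 → z = 0)
    {a : B} (ha : IsSelfAdjoint a) (x : B) :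
    a*(a*(a*x)) + 3•(a*(x*(a*a))) = 3•(a*(a*(x*a))) + x*(a*(a*a)) := by
  obtain ⟨n, hn⟩ := exists_nat_ge (‖a‖ * ‖(1:B)‖)
  set c : ℝ := (n : ℝ) with hc
  have hspec : ∀ s : spectrum ℝ a, -c ≤ (s:ℝ) ∧ (s:ℝ) ≤ c := by
    intro s
    have h1 : ‖(s : ℝ)‖ ≤ ‖a‖ * ‖(1:B)‖ := spectrum.norm_le_norm_mul_of_mem s.2
    rw [Real.norm_eq_abs] at h1
    exact abs_le.mp (h1.trans hn)
  set K := spectrum ℝ a with hK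
  let Φ : C(K, ℝ) →⋆ₐ[ℝ] B := cfcHom ha
  have hΦc : Continuous Φ := cfcHom_continuous ha
  let ΦL : C(K, ℝ) →L[ℝ] B := ⟨Φ.toAlgHom.toLinearMap, hΦc⟩
  have hΦL : ∀ f, ΦL f = Φ f := fun _ => rfl
  have hΦid : Φ ((ContinuousMap.id ℝ).restrict K) = a := cfcHom_id ha
  let F : ℝ → C(K, ℝ) := fun t => ⟨fun s => max ((s:ℝ) - t) 0, by fun_prop⟩
  let G : ℝ → C(K, ℝ) := fun t => ⟨fun s => max (t - (s:ℝ)) 0, by fun_prop⟩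
  have hFlip : LipschitzWith 1 F := by
    refine LipschitzWith.of_dist_le_mul fun t t' => ?_
    rw [NNReal.coe_one, one_mul, ContinuousMap.dist_le dist_nonneg]
    intro s
    rw [Real.dist_eq, Real.dist_eq]
    show |max ((s:ℝ) - t) 0 - max ((s:ℝ) - t') 0| ≤ |t - t'|
    calc |max ((s:ℝ) - t) 0 - max ((s:ℝ) - t') 0| ≤ |((s:ℝ) - t) - ((s:ℝ) - t')| :=
          abs_max_sub_max_le_abs _ _ _
    _ = |t - t'| := by rw [show (s:ℝ) - t - ((s:ℝ) - t') = -(t - t') by ring, abs_neg]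
  have hFG : ∀ t, F t - G t = (ContinuousMap.id ℝ).restrict K - t • 1 := by
    intro t
    ext s
    show max ((s:ℝ) - t) 0 - max (t - (s:ℝ)) 0 = (s:ℝ) - t • 1
    rw [show t - (s:ℝ) = -((s:ℝ) - t) by ring, max_zero_sub_max_neg_zero_eq_self]
    simp [smul_eq_mul]
  have hGF0 : ∀ t, (G t) * (F t) = 0 := by
    intro t
    ext s
    show max (t - (s:ℝ)) 0 * max ((s:ℝ) - t) 0 = 0
    rcases le_total ((s:ℝ)) t with h | h
    · rw [max_eq_right (show (s:ℝ) - t ≤ 0 by linarith), mul_zero]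
    · rw [max_eq_right (show t - (s:ℝ) ≤ 0 by linarith), zero_mul]
  have hFG0 : ∀ t, (F t) * (G t) = 0 := by
    intro t
    ext s
    show max ((s:ℝ) - t) 0 * max (t - (s:ℝ)) 0 = 0
    rcases le_total ((s:ℝ)) t with h | h
    · rw [max_eq_right (show (s:ℝ) - t ≤ 0 by linarith), zero_mul]
    · rw [max_eq_right (show t - (s:ℝ) ≤ 0 by linarith), mul_zero]
  have hPsubN : ∀ t, Φ (F t) - Φ (G t) = a - t • (1:B) := by
    intro t
    rw [← map_sub, hFG t, map_sub, _root_.map_smul, map_one, hΦid]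
  have hPN0 : ∀ t (u : B), Φ (F t) * u * Φ (G t) = 0 := by
    intro t u
    apply hsq
    have e : Φ (F t) * u * Φ (G t) * (Φ (F t) * u * Φ (G t))
        = Φ (F t) * u * ((Φ (G t) * Φ (F t)) * (u * Φ (G t))) := by
      simp only [mul_assoc]
    rw [e, ← map_mul, hGF0, map_zero, zero_mul, mul_zero]
  have hNP0 : ∀ t (u : B), Φ (G t) * u * Φ (F t) = 0 := by
    intro t u
    apply hsq
    have e : Φ (G t) * u * Φ (F t) * (Φ (G t) * u * Φ (F t))
        = Φ (G t) * u * ((Φ (F t) * Φ (G t)) * (u * Φ (F t))) := by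
      simp only [mul_assoc]
    rw [e, ← map_mul, hFG0, map_zero, zero_mul, mul_zero]
  have rel : ∀ t : ℝ, (a*x) * Φ (F t) - t • (x * Φ (F t))
      = Φ (F t) * (x*a) - t • (Φ (F t) * x) := by
    intro t
    have key : (Φ (F t) - Φ (G t)) * x * Φ (F t) = Φ (F t) * x * (Φ (F t) - Φ (G t)) := by
      rw [sub_mul, sub_mul, hNP0 t x, sub_zero, mul_sub, hPN0 t x, sub_zero]
    rw [hPsubN t] at key
    calc (a*x) * Φ (F t) - t • (x * Φ (F t)) = (a - t • (1:B)) * x * Φ (F t) := by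
          rw [sub_mul, sub_mul, smul_mul_assoc, smul_mul_assoc, one_mul, mul_assoc]
    _ = Φ (F t) * x * (a - t • (1:B)) := key
    _ = Φ (F t) * (x*a) - t • (Φ (F t) * x) := by
          rw [mul_sub, mul_smul_comm, mul_one, mul_assoc]
  have hFc : Continuous F := hFlip.continuous
  have hPc : Continuous fun t => Φ (F t) := hΦc.comp hFc
  have hFint : IntervalIntegrable F volume (-c) c := hFc.intervalIntegrable _ _
  have hFtint : IntervalIntegrable (fun t => t • F t) volume (-c) c :=
    (continuous_id.smul hFc).intervalIntegrable _ _
  have hPint : IntervalIntegrable (fun t => Φ (F t)) volume (-c) c := hPc.intervalIntegrable _ _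
  have hPtint : IntervalIntegrable (fun t => t • Φ (F t)) volume (-c) c :=
    (continuous_id.smul hPc).intervalIntegrable _ _
  set S : B := ∫ t in (-c)..c, Φ (F t) with hSdef
  set T : B := ∫ t in (-c)..c, t • Φ (F t) with hTdef
  have hSval : S = ΦL (∫ t in (-c)..c, F t) := by
    rw [hSdef, ← ΦL.intervalIntegral_comp_comm hFint]
    simp only [hΦL]
  have hTval : T = ΦL (∫ t in (-c)..c, t • F t) := by
    rw [hTdef, ← ΦL.intervalIntegral_comp_comm hFtint]
    simp only [_root_.map_smul, hΦL]
  have hIF : ∀ s : K, (∫ t in (-c)..c, F t) s = (((s:ℝ))+c)^2/2 := by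
    intro s
    have h : (∫ t in (-c)..c, (ContinuousMap.evalCLM ℝ s) (F t))
        = (ContinuousMap.evalCLM ℝ s) (∫ t in (-c)..c, F t) :=
      (ContinuousMap.evalCLM ℝ s).intervalIntegral_comp_comm hFint
    have h1 : (∫ t in (-c)..c, (ContinuousMap.evalCLM ℝ s) (F t))
        = ∫ t in (-c)..c, max (((s:ℝ)) - t) 0 :=
      intervalIntegral.integral_congr fun t _ => rfl
    have h2 : (ContinuousMap.evalCLM ℝ s) (∫ t in (-c)..c, F t)
        = (∫ t in (-c)..c, F t) s := rfl
    rw [h1, kap_int1 (hspec s).1 (hspec s).2] at h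
    rw [← h2, ← h]
  have hIT : ∀ s : K, (∫ t in (-c)..c, t • F t) s
      = ((s:ℝ))^3/6 - ((s:ℝ))*c^2/2 - c^3/3 := by
    intro s
    have h : (∫ t in (-c)..c, (ContinuousMap.evalCLM ℝ s) (t • F t))
        = (ContinuousMap.evalCLM ℝ s) (∫ t in (-c)..c, t • F t) :=
      (ContinuousMap.evalCLM ℝ s).intervalIntegral_comp_comm hFtint
    have h1 : (∫ t in (-c)..c, (ContinuousMap.evalCLM ℝ s) (t • F t))
        = ∫ t in (-c)..c, t * max (((s:ℝ)) - t) 0 := by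
      refine intervalIntegral.integral_congr fun t _ => ?_
      show (t • F t) s = t * max (((s:ℝ)) - t) 0
      rw [ContinuousMap.smul_apply, smul_eq_mul]
      rfl
    have h2 : (ContinuousMap.evalCLM ℝ s) (∫ t in (-c)..c, t • F t)
        = (∫ t in (-c)..c, t • F t) s := rfl
    rw [h1, kap_int2 (hspec s).1 (hspec s).2] at h
    rw [← h2, ← h]
  set idK : C(K, ℝ) := (ContinuousMap.id ℝ).restrict K with hidK
  have hS6 : (6:ℝ) • S = a*a + a*a + a*a + (6*c) • a + (3*c^2) • (1:B) := by
    rw [hSval, ← _root_.map_smul]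
    have e : (6:ℝ) • (∫ t in (-c)..c, F t)
        = idK * idK + idK * idK + idK * idK + (6*c) • idK + (3*c^2) • 1 := by
      ext s
      simp only [ContinuousMap.smul_apply, ContinuousMap.add_apply, ContinuousMap.mul_apply,
        ContinuousMap.one_apply, hidK, ContinuousMap.restrict_apply, ContinuousMap.id_apply,
        smul_eq_mul]
      rw [hIF s]
      ring
    rw [e]
    simp only [hΦL, map_add, map_mul, _root_.map_smul, map_one, hΦid]
  have hT6 : (6:ℝ) • T = a*(a*a) - (3*c^2) • a - (2*c^3) • (1:B) := by
    rw [hTval, ← _root_.map_smul]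
    have e : (6:ℝ) • (∫ t in (-c)..c, t • F t)
        = idK * (idK * idK) - (3*c^2) • idK - (2*c^3) • 1 := by
      ext s
      simp only [ContinuousMap.smul_apply, ContinuousMap.sub_apply, ContinuousMap.mul_apply,
        ContinuousMap.one_apply, hidK, ContinuousMap.restrict_apply, ContinuousMap.id_apply,
        smul_eq_mul]
      rw [hIT s]
      ring
    rw [e]
    simp only [hΦL, map_sub, map_mul, _root_.map_smul, map_one, hΦid]
  have hJ1 : (∫ t in (-c)..c, (a*x) * Φ (F t)) = (a*x) * S := by
    have h := (ContinuousLinearMap.mul ℝ B (a*x)).intervalIntegral_comp_comm hPint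
    simpa only [ContinuousLinearMap.mul_apply'] using h
  have hJ2 : (∫ t in (-c)..c, t • (x * Φ (F t))) = x * T := by
    have h := (ContinuousLinearMap.mul ℝ B x).intervalIntegral_comp_comm hPtint
    simp only [ContinuousLinearMap.mul_apply'] at h
    rw [← h]
    exact intervalIntegral.integral_congr fun t _ => (mul_smul_comm t x (Φ (F t))).symm
  have hJ3 : (∫ t in (-c)..c, Φ (F t) * (x*a)) = S * (x*a) := by
    have h := ((ContinuousLinearMap.mul ℝ B).flip (x*a)).intervalIntegral_comp_comm hPint
    simpa only [ContinuousLinearMap.flip_apply, ContinuousLinearMap.mul_apply'] using h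
  have hJ4 : (∫ t in (-c)..c, t • (Φ (F t) * x)) = T * x := by
    have h := ((ContinuousLinearMap.mul ℝ B).flip x).intervalIntegral_comp_comm hPtint
    simp only [ContinuousLinearMap.flip_apply, ContinuousLinearMap.mul_apply'] at h
    rw [← h]
    exact intervalIntegral.integral_congr fun t _ => (smul_mul_assoc t (Φ (F t)) x).symm
  have E : (a*x) * S - x * T = S * (x*a) - T * x := by
    have i1 : IntervalIntegrable (fun t => a * x * Φ (F t)) volume (-c) c :=
      ((continuous_const.mul hPc : Continuous fun t => a * x * Φ (F t))).intervalIntegrable _ _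
    have i2 : IntervalIntegrable (fun t => t • (x * Φ (F t))) volume (-c) c :=
      ((continuous_id.smul (continuous_const.mul hPc) :
        Continuous fun t => t • (x * Φ (F t)))).intervalIntegrable _ _
    have i3 : IntervalIntegrable (fun t => Φ (F t) * (x * a)) volume (-c) c :=
      ((hPc.mul continuous_const : Continuous fun t => Φ (F t) * (x * a))).intervalIntegrable _ _
    have i4 : IntervalIntegrable (fun t => t • (Φ (F t) * x)) volume (-c) c :=
      ((continuous_id.smul (hPc.mul continuous_const) :
        Continuous fun t => t • (Φ (F t) * x))).intervalIntegrable _ _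
    rw [← hJ1, ← hJ2, ← hJ3, ← hJ4, ← intervalIntegral.integral_sub i1 i2,
      ← intervalIntegral.integral_sub i3 i4]
    exact intervalIntegral.integral_congr fun t _ => rel t
  have E6 : (a*x) * ((6:ℝ)•S) - x * ((6:ℝ)•T) = ((6:ℝ)•S) * (x*a) - ((6:ℝ)•T) * x := by
    simp only [mul_smul_comm, smul_mul_assoc, ← smul_sub]
    exact congrArg (fun z => (6:ℝ) • z) E
  rw [hS6, hT6] at E6
  have hfinal : ((a*x) * (a*a + a*a + a*a + (6*c) • a + (3*c^2) • (1:B))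
        - x * (a*(a*a) - (3*c^2) • a - (2*c^3) • (1:B)))
      - ((a*a + a*a + a*a + (6*c) • a + (3*c^2) • (1:B)) * (x*a)
        - (a*(a*a) - (3*c^2) • a - (2*c^3) • (1:B)) * x)
      = (a*(a*(a*x)) + 3•(a*(x*(a*a)))) - (3•(a*(a*(x*a))) + x*(a*(a*a))) := by
    noncomm_ring
  have h0 := sub_eq_zero_of_eq E6
  rw [hfinal] at h0
  exact sub_eq_zero.mp h0


private lemma sa_comm (hsq : ∀ z : B, z * z = 0 → z = 0)
    {a : B} (ha : IsSelfAdjoint a) (x : B) : a * x = x * a := by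
  let D : B → B := fun z => a*z - z*a
  have hDdef : ∀ z, D z = a*z - z*a := fun _ => rfl
  have h3 : ∀ z, D (D (D z)) = 0 := by
    intro z
    have hc := cube_rel hsq ha z
    have he : D (D (D z)) = (a*(a*(a*z)) + 3•(a*(z*(a*a)))) - (3•(a*(a*(z*a))) + z*(a*(a*a))) := by
      simp only [hDdef]
      noncomm_ring
    rw [he, hc, sub_self]
  have hmul : ∀ u v : B, D (u*v) = D u * v + u * D v := by
    intro u v; simp only [hDdef]; noncomm_ring
  have hadd : ∀ u v : B, D (u + v) = D u + D v := by
    intro u v; simp only [hDdef]; noncomm_ring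
  have hsmul2 : ∀ u : B, D (2•u) = 2•(D u) := by
    intro u; simp only [hDdef]; noncomm_ring
  have l1 : ∀ u v : B, D (D (u*v)) = D (D u) * v + 2•(D u * D v) + u * D (D v) := by
    intro u v
    rw [hmul u v, hadd, hmul, hmul]
    abel
  have l2 : ∀ u v : B, D (D (D (u*v)))
      = D (D (D u))*v + 3•(D (D u) * D v) + 3•(D u * D (D v)) + u*D (D (D v)) := by
    intro u v
    rw [l1 u v, hadd, hadd, hsmul2, hmul, hmul, hmul]
    abel
  have hdiv : ∀ (k : ℕ) (w : B), k ≠ 0 → k•w = 0 → w = 0 := by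
    intro k w hk h
    have h' : ((k:ℝ))•w = 0 := by rwa [Nat.cast_smul_eq_nsmul]
    rcases smul_eq_zero.mp h' with h'' | h''
    · exact absurd h'' (Nat.cast_ne_zero.mpr hk)
    · exact h''
  have hstar : ∀ u v : B, D (D u) * D v + D u * D (D v) = 0 := by
    intro u v
    have h := (l2 u v).symm.trans (h3 (u*v))
    rw [h3 u, h3 v, zero_mul, mul_zero, zero_add, add_zero, ← smul_add] at h
    exact hdiv 3 _ (by norm_num) h
  have hD2 : ∀ z, D (D z) = 0 := by
    intro z
    apply hsq
    have h := hstar z (D z)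
    rw [h3 z, mul_zero, add_zero] at h
    exact h
  have hD1 : ∀ z, D z = 0 := by
    intro z
    apply hsq
    have h := l1 z z
    rw [hD2 (z*z), hD2 z, zero_mul, mul_zero, zero_add, add_zero] at h
    exact hdiv 2 _ (by norm_num) h.symm
  have h := hD1 x
  rw [hDdef] at h
  exact sub_eq_zero.mp h

private lemma kap_comm (hsq : ∀ z : B, z * z = 0 → z = 0) (p q : B) : p * q = q * p := by
  have hsa1 : IsSelfAdjoint (p + star p) := by
    rw [IsSelfAdjoint, star_add, star_star, add_comm]
  have hsa2 : IsSelfAdjoint (Complex.I • (p - star p)) := by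
    rw [IsSelfAdjoint, star_smul, star_sub, star_star, Complex.star_def, Complex.conj_I,
      neg_smul, smul_sub, smul_sub, neg_sub]
  have h1 := sa_comm hsq hsa1 q
  have h2 := sa_comm hsq hsa2 q
  rw [smul_mul_assoc, mul_smul_comm] at h2
  have h2' : (p - star p) * q = q * (p - star p) := smul_right_injective B Complex.I_ne_zero h2
  have hsum : ((p + star p) + (p - star p)) * q = q * ((p + star p) + (p - star p)) := by
    rw [add_mul, mul_add, h1, h2']
  rw [show (p + star p) + (p - star p) = p + p from by abel, add_mul, mul_add] at hsum
  have h4 : (2:ℝ) • (p * q) = (2:ℝ) • (q * p) := by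
    rw [two_smul, two_smul]
    exact hsum
  exact smul_right_injective B (two_ne_zero) h4

end

theorem stmt_5 (A : Type*) [NonUnitalNormedRing A] [StarRing A] [CStarRing A]
    [NormedSpace ℂ A] [IsScalarTower ℂ A A] [SMulCommClass ℂ A A] [StarModule ℂ A]
    [CompleteSpace A]
    (hnc : ¬ ∀ a b : A, a * b = b * a) :
    ∃ x : A, x ≠ 0 ∧ x * x = 0 := by
  by_contra hcon
  push_neg at hcon
  have hsqA : ∀ z : A, z * z = 0 → z = 0 := by
    intro z hz
    by_contra h
    exact hcon z h hz
  letI : NonUnitalCStarAlgebra A :=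
    { ‹NonUnitalNormedRing A›, ‹StarRing A›, ‹CStarRing A›, ‹CompleteSpace A›,
      ‹NormedSpace ℂ A›, ‹IsScalarTower ℂ A A›, ‹SMulCommClass ℂ A A›, ‹StarModule ℂ A› with }
  have hsqB : ∀ z : Unitization ℂ A, z * z = 0 → z = 0 := by
    intro z hz
    have h1 : z.fst * z.fst = 0 := by rw [← Unitization.fst_mul, hz, Unitization.fst_zero]
    have h1' : z.fst = 0 := by
      exact mul_self_eq_zero.mp h1
    have h2 : z.snd * z.snd = 0 := by
      have h := congrArg (fun w : Unitization ℂ A => w.snd) hz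
      rw [Unitization.snd_mul, h1'] at h
      simpa using h
    exact Unitization.ext (by simp [h1']) (by simpa using hsqA _ h2)
  apply hnc
  intro α β
  have h := kap_comm hsqB (α : Unitization ℂ A) (β : Unitization ℂ A)
  rw [← Unitization.inr_mul, ← Unitization.inr_mul] at h
  exact Unitization.inr_injective h
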